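/- Let Q_1,…,Q_r ∈ ℂ[x_1,…,x_r] be polynomials such that the polynomial ring ℂ[x_1,…,x_r] is integral over the ℂ-subalgebra generated by Q_1,…,Q_r. Then the polynomial map φ : ℂ^r → ℂ^r defined by φ(b) = (Q_1(b),…,Q_r(b)) is surjective: for every a = (a_1,…,a_r) ∈ ℂ^r there exists b ∈ ℂ^r with Q_i(b) = a_i for all i. -/

import Mathlib

open MvPolynomial

section AuxiliaryLemmas
open Matrix
abbrev R' (r : ℕ) := MvPolynomial (Fin r) ℂ


lemma chain_rule {r : ℕ} {ι : Type*} [Fintype ι] [DecidableEq ι]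
    (g : ι → MvPolynomial (Fin r) ℂ)
    (c : MvPolynomial ι ℂ) (k : Fin r) :
    pderiv k (aeval g c) = ∑ m, aeval g (pderiv m c) * pderiv k (g m) := by
  induction c using MvPolynomial.induction_on with
  | C a => simp
  | add p q hp hq =>
      simp only [map_add, hp, hq, add_mul, Finset.sum_add_distrib]
  | mul_X p i hp =>
    simp only [_root_.map_mul, aeval_X, Derivation.leibniz, smul_eq_mul, _root_.map_add,
      pderiv_X, Pi.single_apply]
    rw [hp, Finset.mul_sum]
    have : ∀ x : ι, ((aeval g) p * (aeval g) (if i = x then (1:MvPolynomial ι ℂ) else 0)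
        + g i * (aeval g) ((pderiv x) p)) * (pderiv k) (g x)
        = (if i = x then (aeval g) p * (pderiv k) (g x) else 0)
          + g i * ((aeval g) ((pderiv x) p) * (pderiv k) (g x)) := by
      intro x; split_ifs <;> simp <;> ring
    rw [Finset.sum_congr rfl (fun x _ => this x), Finset.sum_add_distrib,
      Finset.sum_ite_eq (Finset.univ) i (fun x => (aeval g) p * (pderiv k) (g x))]
    simp

lemma pderiv_eq_sum {r : ℕ} (p : MvPolynomial (Fin r) ℂ) (i : Fin r) :
    pderiv i p = ∑ d ∈ p.support,
      monomial (d - Finsupp.single i 1) (coeff d p * d i) := by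
  conv_lhs => rw [← support_sum_monomial_coeff p]
  rw [map_sum]
  exact Finset.sum_congr rfl fun d _ => pderiv_monomial

lemma pderiv_ne_zero_of {r : ℕ} {p : MvPolynomial (Fin r) ℂ} {d₀ : Fin r →₀ ℕ}
    (hd : d₀ ∈ p.support) {i : Fin r} (hi : d₀ i ≠ 0) : pderiv i p ≠ 0 := by
  classical
  have key : coeff (d₀ - Finsupp.single i 1) (pderiv i p) = coeff d₀ p * d₀ i := by
    rw [pderiv_eq_sum, MvPolynomial.coeff_sum]
    rw [Finset.sum_eq_single d₀]
    · rw [coeff_monomial, if_pos rfl]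
    · intro d _ hne
      rw [coeff_monomial]
      split_ifs with h
      · by_cases hdi : d i = 0
        · simp [hdi]
        · exfalso
          apply hne
          have h1 : Finsupp.single i 1 ≤ d := Finsupp.single_le_iff.mpr (by omega)
          have h2 : Finsupp.single i 1 ≤ d₀ := Finsupp.single_le_iff.mpr (by omega)
          calc d = d - Finsupp.single i 1 + Finsupp.single i 1 :=
                (tsub_add_cancel_of_le h1).symm
            _ = d₀ - Finsupp.single i 1 + Finsupp.single i 1 := by rw [h]
            _ = d₀ := tsub_add_cancel_of_le h2
      · rfl
    · intro h; exact absurd hd h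
  intro h0
  rw [h0] at key
  simp only [coeff_zero] at key
  have h1 : coeff d₀ p ≠ 0 := mem_support_iff.mp hd
  have h2 : ((d₀ i : ℂ)) ≠ 0 := Nat.cast_ne_zero.mpr hi
  exact (mul_ne_zero h1 h2) key.symm

lemma totalDegree_pderiv_lt {r : ℕ} {p : MvPolynomial (Fin r) ℂ}
    (hp : p.totalDegree ≠ 0) (i : Fin r) :
    (pderiv i p).totalDegree < p.totalDegree := by
  classical
  rw [pderiv_eq_sum]
  refine lt_of_le_of_lt (totalDegree_finset_sum _ _) ?_
  rw [Finset.sup_lt_iff (by simpa [bot_eq_zero] using Nat.pos_of_ne_zero hp : ⊥ < p.totalDegree)]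
  intro d hd
  by_cases hdi : d i = 0
  · rw [show ((d i : ℂ)) = 0 by exact_mod_cast congrArg Nat.cast hdi, mul_zero,
      map_zero]
    simpa using Nat.pos_of_ne_zero hp
  · refine lt_of_le_of_lt (totalDegree_monomial_le _ _) ?_
    show ((d - Finsupp.single i 1).sum fun _ e => e) < p.totalDegree
    have hle : Finsupp.single i 1 ≤ d := by
      rw [Finsupp.single_le_iff]
      omega
    have hcancel : (d - Finsupp.single i 1) + Finsupp.single i 1 = d :=
      tsub_add_cancel_of_le hle
    have hsum : ((d - Finsupp.single i 1).sum fun _ e => e) + 1 = d.sum fun _ e => e := by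
      conv_rhs => rw [← hcancel]
      rw [Finsupp.sum_add_index' (fun _ => rfl) (fun _ _ _ => rfl)]
      rw [Finsupp.sum_single_index rfl]
    have hdtot : (d.sum fun _ e => e) ≤ p.totalDegree := le_totalDegree hd
    omega
lemma uside {r : ℕ} (Q : Fin r → MvPolynomial (Fin r) ℂ)
    (hint : Algebra.IsIntegral (Algebra.adjoin ℂ (Set.range Q))
      (MvPolynomial (Fin r) ℂ)) (j : Fin r) :
    ∃ (u : R' r) (w : Fin r → R' r), u ≠ 0 ∧
      ∀ k, (if k = j then u else 0) + ∑ m, w m * pderiv k (Q m) = 0 := by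
  classical
  set A := Algebra.adjoin ℂ (Set.range Q) with hA
  -- existence of a witness
  have hex : ∃ n : ℕ, 1 ≤ n ∧ ∃ G : Polynomial (R' r), G.natDegree = n ∧
      (∀ i, G.coeff i ∈ A) ∧ Polynomial.eval (X j) G = 0 := by
    obtain ⟨p, pmonic, hp⟩ := hint.isIntegral (X j)
    refine ⟨p.natDegree, ?_, p.map (algebraMap A (R' r)), ?_, ?_, ?_⟩
    · by_contra h
      have h0 : p.natDegree = 0 := by omega
      rw [Polynomial.Monic.natDegree_eq_zero pmonic] at h0
      rw [h0] at hp
      simp at hp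
    · exact (pmonic.natDegree_map _)
    · intro i
      rw [Polynomial.coeff_map]
      exact SetLike.coe_mem _
    · rw [Polynomial.eval_map]; exact hp
  set n := Nat.find hex with hn
  obtain ⟨hn1, G, hGdeg, hGA, hGev⟩ := Nat.find_spec hex
  rw [← hn] at hn1 hGdeg
  have hGne : G ≠ 0 := fun h => by simp [h] at hGdeg; omega
  -- the diagonal entry
  set u : R' r := Polynomial.eval (X j) (Polynomial.derivative G) with hu
  have hune : u ≠ 0 := by
    intro h0
    have hd : (Polynomial.derivative G).coeff (n - 1) = G.coeff n * n := by
      have := Polynomial.coeff_derivative G (n - 1)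
      rwa [Nat.sub_add_cancel hn1, Nat.cast_sub hn1, Nat.cast_one, sub_add_cancel] at this
    have hcoeffn : G.coeff n = G.leadingCoeff := by rw [Polynomial.leadingCoeff, hGdeg]
    have hlc : G.leadingCoeff ≠ 0 := Polynomial.leadingCoeff_ne_zero.mpr hGne
    have hdne : (Polynomial.derivative G).coeff (n-1) ≠ 0 := by
      rw [hd, hcoeffn]
      exact mul_ne_zero hlc (by exact_mod_cast (by omega : (n:ℕ) ≠ 0))
    have hDne : Polynomial.derivative G ≠ 0 := fun h => by simp [h] at hdne
    have hdeg : (Polynomial.derivative G).natDegree = n - 1 := by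
      have h1 : (Polynomial.derivative G).natDegree < n := by
        rw [← hGdeg]; exact Polynomial.natDegree_derivative_lt (by omega)
      have h2 : n - 1 ≤ (Polynomial.derivative G).natDegree :=
        Polynomial.le_natDegree_of_ne_zero hdne
      omega
    rcases Nat.lt_or_ge 1 n with hn2 | hn2
    · -- n ≥ 2 : derivative contradicts minimality
      have : n ≤ n - 1 := by
        apply Nat.find_min' hex
        refine ⟨by omega, Polynomial.derivative G, hdeg, ?_, h0⟩
        intro i
        rw [Polynomial.coeff_derivative]
        exact mul_mem (hGA (i+1)) (by exact_mod_cast Subalgebra.natCast_mem A (i+1))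
      omega
    · -- n = 1 : derivative is a nonzero constant, but evaluates to 0
      have hn1' : n = 1 := by omega
      have : Polynomial.derivative G = Polynomial.C ((Polynomial.derivative G).coeff 0) :=
        Polynomial.eq_C_of_natDegree_eq_zero (by omega)
      rw [hu, this] at h0
      simp at h0
      exact hdne (by simpa [hn1'] using h0)
  -- choose preimages of the coefficients
  have hmem : ∀ i : ℕ, ∃ c : MvPolynomial (Fin r) ℂ, aeval Q c = G.coeff i := by
    intro i
    have := hGA i
    rw [hA, Algebra.adjoin_range_eq_range_aeval] at this
    exact this
  choose c hc using hmem
  refine ⟨u, fun m => ∑ i ∈ Finset.range (n+1),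
      aeval Q (pderiv m (c i)) * (X j)^i, hune, ?_⟩
  intro k
  have hs : ∀ i : ℕ, pderiv k ((X j : R' r)^i)
      = (i : R' r) * (X j)^(i-1) * (if k = j then 1 else 0) := by
    intro i
    rw [pderiv_pow]
    congr 1
    split_ifs with h
    · rw [h]; exact pderiv_X_self j
    · exact pderiv_X_of_ne fun hh => h hh.symm
  have hdervlt : (Polynomial.derivative G).natDegree < n + 1 := by
    have := Polynomial.natDegree_derivative_lt (p := G) (by omega)
    omega
  have expand : pderiv k (Polynomial.eval (X j) G) =
      (if k = j then u else 0) + ∑ m, (∑ i ∈ Finset.range (n+1),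
        aeval Q (pderiv m (c i)) * (X j)^i) * pderiv k (Q m) := by
    calc pderiv k (Polynomial.eval (X j) G)
        = ∑ i ∈ Finset.range (n+1), (aeval Q (c i) *
            ((i:R' r)*(X j)^(i-1)*(if k = j then 1 else 0))
            + (X j)^i * (∑ m, aeval Q (pderiv m (c i)) * pderiv k (Q m))) := by
          rw [Polynomial.eval_eq_sum_range, hGdeg, map_sum]
          refine Finset.sum_congr rfl fun i _ => ?_
          rw [← hc i, Derivation.leibniz, smul_eq_mul, smul_eq_mul, hs i, chain_rule]
      _ = (if k = j then u else 0) + ∑ m, (∑ i ∈ Finset.range (n+1),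
            aeval Q (pderiv m (c i)) * (X j)^i) * pderiv k (Q m) := by
          rw [Finset.sum_add_distrib]
          congr 1
          · split_ifs with h
            · simp only [mul_one]
              rw [hu, Polynomial.eval_eq_sum_range' hdervlt,
                Finset.sum_range_succ', Finset.sum_range_succ]
              have hlast : (Polynomial.derivative G).coeff n * (X j)^n = 0 := by
                rw [Polynomial.coeff_derivative,
                  Polynomial.coeff_eq_zero_of_natDegree_lt (by omega)]
                simp
              rw [hlast, add_zero]
              simp only [Nat.cast_zero, zero_mul, mul_zero, add_zero, Nat.add_sub_cancel]
              refine Finset.sum_congr rfl fun i _ => ?_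
              rw [hc (i+1), Polynomial.coeff_derivative]
              push_cast
              ring
            · simp
          · simp only [Finset.mul_sum]
            rw [Finset.sum_comm]
            refine Finset.sum_congr rfl fun m _ => ?_
            rw [Finset.sum_mul]
            refine Finset.sum_congr rfl fun i _ => by ring
  rw [hGev] at expand
  simp only [map_zero] at expand
  exact expand.symm

lemma indepQ {r : ℕ} (Q : Fin r → MvPolynomial (Fin r) ℂ)
    (hint : Algebra.IsIntegral (Algebra.adjoin ℂ (Set.range Q))
      (MvPolynomial (Fin r) ℂ)) :
    AlgebraicIndependent ℂ Q := by
  classical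
  set J : Matrix (Fin r) (Fin r) (R' r) := Matrix.of fun m k => pderiv k (Q m) with hJ
  have hdet : J.det ≠ 0 := by
    choose u w hu hrel using uside Q hint
    have hmat : Matrix.diagonal u = (-(Matrix.of w)) * J := by
      refine Matrix.ext fun j k => ?_
      have h := hrel j k
      simp only [Matrix.mul_apply, Matrix.neg_apply, Matrix.of_apply, hJ,
        Matrix.diagonal_apply, neg_mul, Finset.sum_neg_distrib]
      have : (if j = k then u j else 0) = (if k = j then u j else 0) := by
        split_ifs with h1 h2 h2 <;> first | rfl | (exact absurd h1.symm h2) | (exact absurd h2.symm h1)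
      rw [this]
      linear_combination h
    intro h0
    have hprod : ∏ j, u j = 0 := by
      have := congrArg Matrix.det hmat
      rw [Matrix.det_diagonal, Matrix.det_mul, h0, mul_zero] at this
      exact this
    obtain ⟨j, _, hj⟩ := Finset.prod_eq_zero_iff.mp hprod
    exact hu j hj
  rw [algebraicIndependent_iff]
  by_contra hcon
  push_neg at hcon
  obtain ⟨p₁, hp₁0, hp₁⟩ := hcon
  have hexv : ∃ nd : ℕ, ∃ p : MvPolynomial (Fin r) ℂ,
      p ≠ 0 ∧ aeval Q p = 0 ∧ p.totalDegree = nd := ⟨_, p₁, hp₁, hp₁0, rfl⟩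
  obtain ⟨p₀, hp0, hpev, hpdeg⟩ := Nat.find_spec hexv
  have hmin : ∀ q : MvPolynomial (Fin r) ℂ, q ≠ 0 → aeval Q q = 0 →
      Nat.find hexv ≤ q.totalDegree := fun q h1 h2 => Nat.find_min' hexv ⟨q, h1, h2, rfl⟩
  -- p₀ is not constant
  have htd : p₀.totalDegree ≠ 0 := by
    intro h0
    rw [totalDegree_eq_zero_iff] at h0
    have : p₀ = C (coeff 0 p₀) := by
      ext d
      rw [coeff_C]
      by_cases hd : (0 : Fin r →₀ ℕ) = d
      · rw [if_pos hd, ← hd]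
      · rw [if_neg hd]
        by_contra hne
        have hds : d ∈ p₀.support := mem_support_iff.mpr hne
        exact hd (by ext x; exact (h0 d hds x).symm)
    rw [this] at hpev hp0
    rw [aeval_C] at hpev
    have : coeff 0 p₀ = 0 := by
      have := congrArg (eval (fun _ => (0:ℂ))) hpev
      simpa using this
    rw [this] at hp0
    simp at hp0
  -- some partial derivative has nonzero image
  have hvne : ∃ m, aeval Q (pderiv m p₀) ≠ 0 := by
    have hsupp : p₀.support.Nonempty := MvPolynomial.support_nonempty.mpr hp0
    have : ¬ (∀ (m : Fin r →₀ ℕ) (_ : m ∈ p₀.support) (x : Fin r), m x = 0) := by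
      rw [← totalDegree_eq_zero_iff]; exact htd
    push_neg at this
    obtain ⟨d₀, hd₀, i, hi⟩ := this
    refine ⟨i, fun h0 => ?_⟩
    have hne := pderiv_ne_zero_of hd₀ hi
    have := hmin _ hne h0
    have hlt := totalDegree_pderiv_lt htd i
    omega
  obtain ⟨m₀, hm₀⟩ := hvne
  -- the vector of partial derivatives kills J
  set v : Fin r → R' r := fun m => aeval Q (pderiv m p₀) with hv
  have hvJ : v ᵥ* J = 0 := by
    funext k
    have := chain_rule Q p₀ k
    rw [hpev, map_zero] at this
    simpa [Matrix.vecMul, dotProduct, hJ, hv, mul_comm] using this.symm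
  have h1 : v ᵥ* (J * J.adjugate) = 0 := by
    rw [← Matrix.vecMul_vecMul, hvJ, Matrix.zero_vecMul]
  rw [Matrix.mul_adjugate] at h1
  have h2 := congrFun h1 m₀
  have : J.det * v m₀ = 0 := by
    simpa [Matrix.vecMul, dotProduct, Matrix.smul_apply, Matrix.one_apply,
      Finset.sum_ite_eq, mul_comm] using h2
  rcases mul_eq_zero.mp this with h | h
  · exact hdet h
  · exact hm₀ h

end AuxiliaryLemmas

/-- If `ℂ[x₁,…,x_r]` is integral over the subalgebra generated by `Q₁,…,Q_r`,
then the polynomial map `b ↦ (Q₁(b),…,Q_r(b))` from `ℂ^r` to `ℂ^r` is surjective. -/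
theorem stmt9 {r : ℕ} (Q : Fin r → MvPolynomial (Fin r) ℂ)
    (hint : Algebra.IsIntegral (Algebra.adjoin ℂ (Set.range Q))
      (MvPolynomial (Fin r) ℂ))
    (a : Fin r → ℂ) :
    ∃ b : Fin r → ℂ, ∀ i, eval b (Q i) = a i := by
  classical
  have hx : AlgebraicIndependent ℂ Q := indepQ Q hint
  set A := Algebra.adjoin ℂ (Set.range Q) with hA
  -- the algebra hom A → ℂ sending Q i to a i
  let ψ : A →ₐ[ℂ] ℂ := (aeval a).comp hx.repr
  have hψsurj : Function.Surjective ψ := fun z =>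
    ⟨algebraMap ℂ A z, by simp [ψ]⟩
  have hψQ : ∀ i, ψ ⟨Q i, Algebra.subset_adjoin (Set.mem_range_self i)⟩ = a i := by
    intro i
    have h1 : hx.repr ⟨Q i, Algebra.subset_adjoin (Set.mem_range_self i)⟩ = X i := by
      apply hx
      rw [hx.aeval_repr]
      simp
    simp [ψ, h1]
  set m := RingHom.ker (ψ : A →+* ℂ) with hm
  have hmmax : m.IsMaximal := RingHom.ker_isMaximal_of_surjective _ hψsurj
  have hbot : RingHom.ker (algebraMap A (MvPolynomial (Fin r) ℂ)) ≤ m := by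
    have : RingHom.ker (algebraMap A (MvPolynomial (Fin r) ℂ)) = ⊥ := by
      rw [RingHom.ker_eq_bot_iff_eq_zero]
      intro x hxx
      exact Subtype.ext hxx
    rw [this]; exact bot_le
  obtain ⟨M, hMmax, hMcomap⟩ := Ideal.exists_ideal_over_maximal_of_isIntegral m hbot
  obtain ⟨b, hb⟩ := (isMaximal_iff_eq_vanishingIdeal_singleton (I := M)).mp hMmax
  refine ⟨b, fun i => ?_⟩
  have hmem : (⟨Q i, Algebra.subset_adjoin (Set.mem_range_self i)⟩ : A)
      - algebraMap ℂ A (a i) ∈ m := by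
    rw [hm, RingHom.mem_ker]
    change ψ _ = 0
    rw [map_sub, hψQ i, AlgHom.commutes]
    simp
  have h4 : (algebraMap ↥A (MvPolynomial (Fin r) ℂ))
      ((⟨Q i, Algebra.subset_adjoin (Set.mem_range_self i)⟩ : A)
        - algebraMap ℂ A (a i)) ∈ M :=
    Ideal.mem_comap.mp (by rw [hMcomap]; exact hmem)
  have h3 : (algebraMap ↥A (MvPolynomial (Fin r) ℂ))
      ((⟨Q i, Algebra.subset_adjoin (Set.mem_range_self i)⟩ : A)
        - algebraMap ℂ A (a i)) = Q i - C (a i) := by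
    rw [RingHom.map_sub]
    congr 1
  rw [h3] at h4
  rw [hb, mem_vanishingIdeal_singleton_iff] at h4
  have h5 : eval b (Q i) - a i = 0 := by simpa using h4
  exact sub_eq_zero.mp h5
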